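/- Let p be an odd prime, write p - 1 = 2^r · h with h odd, and let x be an integer not divisible by p. If n is a positive integer with x^n ≡ -1 (mod p) and n = 2^s · n' with n' odd, then s < r. -/
import Mathlib


theorem two_adic_lt_of_pow_cong_neg_one (p : ℕ) (hp : p.Prime) (hodd : Odd p)
    (r h : ℕ) (hh : Odd h) (hph : p - 1 = 2 ^ r * h)
    (x : ℤ) (hx : ¬ (p : ℤ) ∣ x)
    (n s n' : ℕ) (hnpos : 0 < n) (hn : n = 2 ^ s * n') (hn' : Odd n')
    (hcong : (p : ℤ) ∣ x ^ n + 1) : s < r := by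
  haveI : Fact p.Prime := ⟨hp⟩
  by_contra hsr
  push_neg at hsr
  set X : ZMod p := (x : ZMod p) with hX
  have hX0 : X ≠ 0 := by
    intro h0
    apply hx
    exact_mod_cast (ZMod.intCast_zmod_eq_zero_iff_dvd x p).mp h0
  have hXn : X ^ n = -1 := by
    have : ((x ^ n + 1 : ℤ) : ZMod p) = 0 :=
      (ZMod.intCast_zmod_eq_zero_iff_dvd _ p).mpr hcong
    push_cast at this
    exact eq_neg_of_add_eq_zero_left this
  have h1 : X ^ (n * h) = -1 := by
    rw [pow_mul, hXn, hh.neg_one_pow]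
  have h2 : X ^ (n * h) = 1 := by
    obtain ⟨t, rfl⟩ : ∃ t, s = r + t := ⟨s - r, by omega⟩
    have : n * h = (p - 1) * (2 ^ t * n') := by
      rw [hn, hph, pow_add]; ring
    rw [this, pow_mul, ZMod.pow_card_sub_one_eq_one hX0, one_pow]
  have hp2 : p ≠ 2 := by
    rintro rfl
    exact (by norm_num : ¬ Odd 2) hodd
  have : (-1 : ZMod p) ≠ 1 := by
    haveI : Fact (2 < p) := ⟨lt_of_le_of_ne hp.two_le (Ne.symm hp2)⟩
    exact ZMod.neg_one_ne_one
  exact this (h1 ▸ h2)
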